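/- Let d ∈ ℕ, ρ > 0 and C ≥ 0. Let ℓ, ℓ̂ : ℝᵈ × ℝᵈ → ℝ both be twice continuously differentiable in the second variable with ⟨∂²_{uu}ℓ(x,u)·v, v⟩ ≥ ρ|v|² and ⟨∂²_{uu}ℓ̂(x,u)·v, v⟩ ≥ ρ|v|² for all x, u, v ∈ ℝᵈ, and let b, b̂ : ℝᵈ → ℝᵈ. Assume that for every x ∈ ℝᵈ the map u ↦ ℓ(x,u) − ℓ̂(x,u) is Lipschitz with constant C, i.e. |(ℓ − ℓ̂)(x,u) − (ℓ − ℓ̂)(x,û)| ≤ C|u − û| for all u, û. Let w(x,p) be the unique minimizer of u ↦ ℓ(x,u) + (b(x)+u)·p and ŵ(x,p) the unique minimizer of u ↦ ℓ̂(x,u) + (b̂(x)+u)·p. Then |w(x,p) − ŵ(x,p)| ≤ C/ρ for all x, p ∈ ℝᵈ. -/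

import Mathlib

open RealInnerProductSpace

lemma aux_strong {E : Type*} [NormedAddCommGroup E] [InnerProductSpace ℝ E]
    (ρ : ℝ) (hρ : 0 < ρ) (f : E → ℝ) (hf : ContDiff ℝ 2 f)
    (hc : ∀ u v : E, ρ * ‖v‖ ^ 2 ≤ iteratedFDeriv ℝ 2 f u ![v, v])
    (p m : E) (hm : ∀ u, f m + ⟪m, p⟫ ≤ f u + ⟪u, p⟫) :
    ∀ u, f m + ⟪m, p⟫ + ρ / 2 * ‖u - m‖ ^ 2 ≤ f u + ⟪u, p⟫ := by
  intro u
  -- second derivative in fderiv form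
  have hc' : ∀ z v : E, ρ * ‖v‖ ^ 2 ≤ fderiv ℝ (fderiv ℝ f) z v v := by
    intro z v
    have := hc z v
    rwa [iteratedFDeriv_two_apply] at this
  set v := u - m with hv
  set c : ℝ → E := fun t => m + t • v with hcdef
  have hcderiv : ∀ t : ℝ, HasDerivAt c v t := by
    intro t
    simpa [hcdef] using ((hasDerivAt_id t).smul_const v).const_add m
  have hfd : Differentiable ℝ f := hf.differentiable (by norm_num)
  have hfd2 : Differentiable ℝ (fderiv ℝ f) :=
    (hf.fderiv_right (m := 1) (by norm_num)).differentiable (by norm_num)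
  -- φ
  set φ : E → ℝ := fun z => f z + ⟪p, z⟫ with hφdef
  have hφmin : IsLocalMin φ m := by
    apply Filter.Eventually.of_forall
    intro z
    have := hm z
    simpa [hφdef, real_inner_comm] using this
  have hφd : ∀ z : E, HasFDerivAt φ (fderiv ℝ f z + innerSL ℝ p) z := by
    intro z
    exact (hfd z).hasFDerivAt.add ((innerSL ℝ p).hasFDerivAt)
  have hφ0 : fderiv ℝ f m + innerSL ℝ p = 0 := by
    rw [← (hφd m).fderiv]
    exact hφmin.fderiv_eq_zero
  -- h and h1
  set h : ℝ → ℝ := fun t => φ (c t) with hhdef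
  set h1 : ℝ → ℝ := fun t => fderiv ℝ f (c t) v + ⟪p, v⟫ with hh1def
  have hh : ∀ t, HasDerivAt h (h1 t) t := by
    intro t
    exact (hφd (c t)).comp_hasDerivAt t (hcderiv t)
  have hh1 : ∀ t, HasDerivAt h1 (fderiv ℝ (fderiv ℝ f) (c t) v v) t := by
    intro t
    have h2 : HasDerivAt (fun t => fderiv ℝ f (c t)) (fderiv ℝ (fderiv ℝ f) (c t) v) t :=
      (hfd2 (c t)).hasFDerivAt.comp_hasDerivAt t (hcderiv t)
    have := h2.clm_apply (hasDerivAt_const t v)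
    simpa [hh1def] using this.add_const ⟪p, v⟫
  have hh10 : h1 0 = 0 := by
    have : (fderiv ℝ f m + innerSL ℝ p) v = 0 := by rw [hφ0]; simp
    simpa [hh1def, hcdef] using this
  -- G1 t = h1 t - ρ‖v‖² t is monotone, so h1 t ≥ ρ‖v‖² t for t ≥ 0
  set K := ρ * ‖v‖ ^ 2 with hK
  have hG1 : ∀ t : ℝ, HasDerivAt (fun t => h1 t - K * t) (fderiv ℝ (fderiv ℝ f) (c t) v v - K) t := by
    intro t
    exact ((hh1 t).sub ((hasDerivAt_id t).const_mul K)).congr_deriv (by ring)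
  have hG1mono : Monotone (fun t => h1 t - K * t) := by
    apply monotone_of_deriv_nonneg
    · exact fun t => ((hG1 t).differentiableAt)
    · intro t
      rw [(hG1 t).deriv]
      have := hc' (c t) v
      linarith
  have hh1ge : ∀ t : ℝ, 0 ≤ t → K * t ≤ h1 t := by
    intro t ht
    have := hG1mono ht
    simp only [hh10, mul_zero, sub_zero] at this
    linarith
  -- g t = h t - h 0 - K/2 t² is monotone on [0, ∞)
  have hg : ∀ t : ℝ, HasDerivAt (fun t => h t - h 0 - K / 2 * t ^ 2) (h1 t - K * t) t := by
    intro t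
    have h2 : HasDerivAt (fun t : ℝ => K / 2 * t ^ 2) (K * t) t := by
      have := ((hasDerivAt_pow 2 t).const_mul (K / 2))
      exact this.congr_deriv (by rw [show (2:ℕ) - 1 = 1 from rfl, pow_one, Nat.cast_ofNat]; ring)
    exact ((hh t).sub_const (h 0)).sub h2
  have hgmono : MonotoneOn (fun t => h t - h 0 - K / 2 * t ^ 2) (Set.Ici (0:ℝ)) := by
    apply monotoneOn_of_deriv_nonneg (convex_Ici 0)
    · exact (Differentiable.continuous (fun t => (hg t).differentiableAt)).continuousOn
    · intro t ht
      exact ((hg t).differentiableAt).differentiableWithinAt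
    · intro t ht
      rw [(hg t).deriv]
      have := hh1ge t (le_of_lt (by simpa using ht))
      linarith
  have key := hgmono (Set.self_mem_Ici) (Set.mem_Ici.mpr zero_le_one) zero_le_one
  simp only [pow_two, mul_zero, zero_mul, mul_one, one_pow, sub_zero, sub_self] at key
  have hval : h 1 = f u + ⟪p, u⟫ := by simp [hhdef, hφdef, hcdef, hv]
  have hval0 : h 0 = f m + ⟪p, m⟫ := by simp [hhdef, hφdef, hcdef]
  have h2 : h 1 = f u + ⟪u, p⟫ := by rw [hval, real_inner_comm]
  have h3 : h 0 = f m + ⟪m, p⟫ := by rw [hval0, real_inner_comm]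
  have h4 : ρ / 2 * ‖v‖ ^ 2 = K / 2 := by rw [hK]; ring
  rw [h4, ← h2, ← h3]
  linarith

/-- stability of the minimizers under a perturbation of the running cost whose
difference `ℓ − ℓ̂` is `C`-Lipschitz in the control variable: `|w(x,p) − ŵ(x,p)| ≤ C/ρ`. -/
theorem stmt8 (d : ℕ) (ρ C : ℝ) (hρ : 0 < ρ) (hC : 0 ≤ C)
    (ℓ ℓh : EuclideanSpace ℝ (Fin d) → EuclideanSpace ℝ (Fin d) → ℝ)
    (b bh : EuclideanSpace ℝ (Fin d) → EuclideanSpace ℝ (Fin d))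
    (hsmooth : ∀ x, ContDiff ℝ 2 (ℓ x)) (hsmooth' : ∀ x, ContDiff ℝ 2 (ℓh x))
    (hconv : ∀ x u v : EuclideanSpace ℝ (Fin d),
      ρ * ‖v‖ ^ 2 ≤ iteratedFDeriv ℝ 2 (ℓ x) u ![v, v])
    (hconv' : ∀ x u v : EuclideanSpace ℝ (Fin d),
      ρ * ‖v‖ ^ 2 ≤ iteratedFDeriv ℝ 2 (ℓh x) u ![v, v])
    (hdiff : ∀ x u u' : EuclideanSpace ℝ (Fin d),
      |(ℓ x u - ℓh x u) - (ℓ x u' - ℓh x u')| ≤ C * ‖u - u'‖)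
    (w wh : EuclideanSpace ℝ (Fin d) → EuclideanSpace ℝ (Fin d) → EuclideanSpace ℝ (Fin d))
    (hw : ∀ x p, ∀ u, ℓ x (w x p) + ⟪b x + w x p, p⟫ ≤ ℓ x u + ⟪b x + u, p⟫)
    (hwuniq : ∀ x p w',
      (∀ u, ℓ x w' + ⟪b x + w', p⟫ ≤ ℓ x u + ⟪b x + u, p⟫) → w' = w x p)
    (hwh : ∀ x p, ∀ u, ℓh x (wh x p) + ⟪bh x + wh x p, p⟫ ≤ ℓh x u + ⟪bh x + u, p⟫)
    (hwhuniq : ∀ x p w',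
      (∀ u, ℓh x w' + ⟪bh x + w', p⟫ ≤ ℓh x u + ⟪bh x + u, p⟫) → w' = wh x p) :
    ∀ x p : EuclideanSpace ℝ (Fin d), ‖w x p - wh x p‖ ≤ C / ρ := by
  intro x p
  set A := w x p with hA
  set B := wh x p with hB
  have hmA : ∀ u, ℓ x A + ⟪A, p⟫ ≤ ℓ x u + ⟪u, p⟫ := by
    intro u
    have := hw x p u
    simp only [inner_add_left] at this
    linarith
  have hmB : ∀ u, ℓh x B + ⟪B, p⟫ ≤ ℓh x u + ⟪u, p⟫ := by
    intro u
    have := hwh x p u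
    simp only [inner_add_left] at this
    linarith
  have s1 := aux_strong ρ hρ (ℓ x) (hsmooth x) (hconv x) p A hmA B
  have s2 := aux_strong ρ hρ (ℓh x) (hsmooth' x) (hconv' x) p B hmB A
  have hd := hdiff x B A
  have hnn : ‖A - B‖ = ‖B - A‖ := norm_sub_rev A B
  have habs : (ℓ x B - ℓh x B) - (ℓ x A - ℓh x A) ≤ C * ‖B - A‖ :=
    le_trans (le_abs_self _) hd
  have hkey : ρ * ‖A - B‖ ^ 2 ≤ C * ‖A - B‖ := by
    have hnn2 : ‖A - B‖ ^ 2 = ‖B - A‖ ^ 2 := by rw [hnn]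
    rw [hnn2] at s2
    rw [hnn]
    linarith [s1, s2, habs]
  rcases eq_or_lt_of_le (norm_nonneg (A - B)) with h0 | h0
  · rw [← h0]
    exact div_nonneg hC hρ.le
  · rw [le_div_iff₀ hρ]
    nlinarith [hkey, h0]
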